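/- Two-point estimation lower bound: for any estimator x̂ measurable with respect to a sample, and compact convex sets X₀, X₁ associated with distributions P₀, P₁, one has E_{P₁}[dist(x̂, X₁)] ≥ max{0, dist(X₀, X₁) − sqrt(E_{P₀}[dist(x̂, X₀)²] · (χ²(P₁‖P₀) + 1))}. -/

import Mathlib

noncomputable section
open MeasureTheory Set
open scoped ENNReal

/-- Two-point estimation lower bound (a strengthened Brown–Low style bound):
`E_{P₁}[dist(x̂, X₁)] ≥ max {0, dist(X₀,X₁) − sqrt(E_{P₀}[dist(x̂,X₀)²]·(χ²(P₁‖P₀)+1))}`,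
where `χ²(P₁‖P₀) = ∫ (dP₁/dP₀) dP₁ − 1`. -/
theorem two_point_superefficiency_lower_bound
    {Ω : Type*} [MeasurableSpace Ω] (P₀ P₁ : Measure Ω)
    [IsProbabilityMeasure P₀] [IsProbabilityMeasure P₁] (hac : P₁ ≪ P₀)
    (xhat : Ω → ℝ) (hxhat : Measurable xhat)
    (X₀ X₁ : Set ℝ) (hX₀ : IsCompact X₀) (hX₁ : IsCompact X₁)
    (hc₀ : Convex ℝ X₀) (hc₁ : Convex ℝ X₁)
    (hn₀ : X₀.Nonempty) (hn₁ : X₁.Nonempty)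
    (hint₁ : Integrable (fun ω => Metric.infDist (xhat ω) X₁) P₁)
    (hint₀ : Integrable (fun ω => (Metric.infDist (xhat ω) X₀) ^ 2) P₀)
    (hintχ : Integrable (fun ω => (P₁.rnDeriv P₀ ω).toReal) P₁) :
    ∫ ω, Metric.infDist (xhat ω) X₁ ∂P₁ ≥
      max 0 (sInf {r | ∃ x ∈ X₀, ∃ y ∈ X₁, r = |x - y|} -
        Real.sqrt ((∫ ω, (Metric.infDist (xhat ω) X₀) ^ 2 ∂P₀) *
          (((∫ ω, (P₁.rnDeriv P₀ ω).toReal ∂P₁) - 1) + 1))) := by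
  set d₀ : Ω → ℝ := fun ω => Metric.infDist (xhat ω) X₀ with hd₀def
  set d₁ : Ω → ℝ := fun ω => Metric.infDist (xhat ω) X₁ with hd₁def
  set ρ : Ω → ℝ := fun ω => (P₁.rnDeriv P₀ ω).toReal with hρdef
  set D : ℝ := sInf {r | ∃ x ∈ X₀, ∃ y ∈ X₁, r = |x - y|} with hDdef
  have hd₀m : Measurable d₀ := (Metric.continuous_infDist_pt X₀).measurable.comp hxhat
  have hρ'm := Measure.measurable_rnDeriv P₁ P₀
  have hρm : Measurable ρ := hρ'm.ennreal_toReal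
  have hlt := Measure.rnDeriv_lt_top P₁ P₀
  have hwd : P₀.withDensity (P₁.rnDeriv P₀) = P₁ :=
    Measure.withDensity_rnDeriv_eq P₁ P₀ hac
  have hρnn : ∀ ω, 0 ≤ ρ ω := fun ω => ENNReal.toReal_nonneg
  have hd₀nn : ∀ ω, 0 ≤ d₀ ω := fun ω => Metric.infDist_nonneg
  -- ρ² integrable wrt P₀
  have hρsq : Integrable (fun ω => ρ ω ^ 2) P₀ := by
    have h := (integrable_withDensity_iff hρ'm hlt (g := ρ)).mp (by rw [hwd]; exact hintχ)
    simpa [pow_two] using h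
  have hρ2 : MemLp ρ 2 P₀ := (memLp_two_iff_integrable_sq hρm.aestronglyMeasurable).mpr hρsq
  have hd₀2 : MemLp d₀ 2 P₀ := (memLp_two_iff_integrable_sq hd₀m.aestronglyMeasurable).mpr hint₀
  -- d₀ integrable wrt P₁
  have hpqr : (1 : ℝ≥0∞) / 1 = 1 / 2 + 1 / 2 := by
    rw [ENNReal.add_halves, one_div_one]
  have hprod : Integrable (fun ω => d₀ ω * ρ ω) P₀ := by
    have h := memLp_one_iff_integrable.mp (hρ2.smul hd₀2 (r := 1))
    exact h
  have hint₀P₁ : Integrable d₀ P₁ := by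
    rw [← hwd]
    exact (integrable_withDensity_iff hρ'm hlt).mpr hprod
  -- change of measure identities
  have hcm₁ : ∫ ω, d₀ ω ∂P₁ = ∫ ω, ρ ω * d₀ ω ∂P₀ := by
    rw [← MeasureTheory.integral_rnDeriv_smul hac (f := d₀)]
    simp [smul_eq_mul]
    rfl
  have hcm₂ : ∫ ω, ρ ω ∂P₁ = ∫ ω, ρ ω ^ 2 ∂P₀ := by
    rw [← MeasureTheory.integral_rnDeriv_smul hac (f := ρ)]
    simp [smul_eq_mul, pow_two]
    rfl
  -- Cauchy–Schwarz
  have hpq : Real.HolderConjugate 2 2 := ⟨by norm_num, by norm_num, by norm_num⟩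
  have hCS : ∫ ω, d₀ ω * ρ ω ∂P₀ ≤
      Real.sqrt (∫ ω, d₀ ω ^ 2 ∂P₀) * Real.sqrt (∫ ω, ρ ω ^ 2 ∂P₀) := by
    have h := integral_mul_le_Lp_mul_Lq_of_nonneg hpq
      (Filter.Eventually.of_forall hd₀nn) (Filter.Eventually.of_forall hρnn)
      (by rw [show ENNReal.ofReal 2 = 2 by norm_num]; exact hd₀2)
      (by rw [show ENNReal.ofReal 2 = 2 by norm_num]; exact hρ2) (μ := P₀)
    simp only [Real.rpow_two] at h
    calc ∫ ω, d₀ ω * ρ ω ∂P₀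
        ≤ (∫ ω, d₀ ω ^ 2 ∂P₀) ^ (1/(2:ℝ)) * (∫ ω, ρ ω ^ 2 ∂P₀) ^ (1/(2:ℝ)) := h
      _ = Real.sqrt (∫ ω, d₀ ω ^ 2 ∂P₀) * Real.sqrt (∫ ω, ρ ω ^ 2 ∂P₀) := by
          rw [Real.sqrt_eq_rpow, Real.sqrt_eq_rpow]
  -- pointwise two-point bound
  have hpt : ∀ ω, D - d₀ ω ≤ d₁ ω := by
    intro ω
    obtain ⟨x₀, hx₀, h0⟩ := hX₀.exists_infDist_eq_dist hn₀ (xhat ω)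
    obtain ⟨x₁, hx₁, h1⟩ := hX₁.exists_infDist_eq_dist hn₁ (xhat ω)
    have hbdd : BddBelow {r | ∃ x ∈ X₀, ∃ y ∈ X₁, r = |x - y|} := by
      refine ⟨0, ?_⟩
      rintro r ⟨x, -, y, -, rfl⟩
      exact abs_nonneg _
    have hDle : D ≤ |x₀ - x₁| := csInf_le hbdd ⟨x₀, hx₀, x₁, hx₁, rfl⟩
    have htri : |x₀ - x₁| ≤ dist (xhat ω) x₀ + dist (xhat ω) x₁ := by
      rw [Real.dist_eq, Real.dist_eq]
      calc |x₀ - x₁| ≤ |x₀ - xhat ω| + |xhat ω - x₁| := abs_sub_le _ _ _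
        _ = |xhat ω - x₀| + |xhat ω - x₁| := by rw [abs_sub_comm]
    have e0 : d₀ ω = dist (xhat ω) x₀ := h0
    have e1 : d₁ ω = dist (xhat ω) x₁ := h1
    rw [e0, e1] at *
    linarith
  -- integral bound
  have hIntSub : Integrable (fun ω => D - d₀ ω) P₁ := (integrable_const D).sub hint₀P₁
  have hmono : ∫ ω, (D - d₀ ω) ∂P₁ ≤ ∫ ω, d₁ ω ∂P₁ :=
    integral_mono hIntSub hint₁ hpt
  have hsub : ∫ ω, (D - d₀ ω) ∂P₁ = D - ∫ ω, d₀ ω ∂P₁ := by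
    rw [integral_sub (integrable_const D) hint₀P₁]
    simp
  have hEρ : (0:ℝ) ≤ ∫ ω, ρ ω ∂P₁ := integral_nonneg hρnn
  have hEd : (0:ℝ) ≤ ∫ ω, d₀ ω ^ 2 ∂P₀ := integral_nonneg fun ω => sq_nonneg _
  have hd₀ρcomm : ∫ ω, ρ ω * d₀ ω ∂P₀ = ∫ ω, d₀ ω * ρ ω ∂P₀ := by
    simp [mul_comm]
  have hkey : ∫ ω, d₀ ω ∂P₁ ≤
      Real.sqrt ((∫ ω, d₀ ω ^ 2 ∂P₀) * (∫ ω, ρ ω ∂P₁)) := by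
    rw [hcm₁, hd₀ρcomm, Real.sqrt_mul hEd, hcm₂]
    exact hCS
  have hLHS0 : (0:ℝ) ≤ ∫ ω, d₁ ω ∂P₁ := integral_nonneg fun ω => Metric.infDist_nonneg
  rw [ge_iff_le]
  refine max_le hLHS0 ?_
  have : ((∫ ω, ρ ω ∂P₁) - 1) + 1 = ∫ ω, ρ ω ∂P₁ := by ring
  rw [this]
  linarith [hmono, hsub.symm ▸ hmono]
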